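/- For H ∈ (1/2, 1), a > 0, σ > 0, the function Z(t) = (σ² H(2H−1)/(2a)) ∫₀^t τ^{2H−2}(e^{−aτ} − e^{aτ−2at}) dτ is nonnegative for all t ≥ 0 and converges as t → ∞ to the limit (σ²/2) a^{−2H} H(2H−1) Γ(2H−1). -/

import Mathlib

open Real MeasureTheory Filter Topology

/-- The fractional OU variance function
`Z(t) = (σ² H(2H-1)/(2a)) ∫₀ᵗ τ^(2H-2)(e^(-aτ) - e^(aτ-2at)) dτ`
is nonnegative on `[0,∞)` and tends to `(σ²/2) a^(-2H) H(2H-1) Γ(2H-1)`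
as `t → ∞`. -/
theorem fou_variance_nonneg_and_limit
    (H a σ : ℝ) (hH : H ∈ Set.Ioo (1 / 2 : ℝ) 1) (ha : 0 < a) (hσ : 0 < σ)
    (Z : ℝ → ℝ)
    (hZ : ∀ t, Z t = σ ^ 2 * H * (2 * H - 1) / (2 * a) *
      ∫ τ in (0:ℝ)..t,
        τ ^ (2 * H - 2) * (Real.exp (-a * τ) - Real.exp (a * τ - 2 * a * t))) :
    (∀ t, 0 ≤ t → 0 ≤ Z t) ∧
    Tendsto Z atTop
      (𝓝 (σ ^ 2 / 2 * a ^ (-(2 * H)) * H * (2 * H - 1) * Real.Gamma (2 * H - 1))) := by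
  obtain ⟨h1, h2⟩ := hH
  have hHpos : (0:ℝ) < H := by linarith
  have h2H : (0:ℝ) < 2 * H - 1 := by linarith
  have hs : (-1:ℝ) < 2 * H - 2 := by linarith
  set C := σ ^ 2 * H * (2 * H - 1) / (2 * a) with hC_def
  have hC : 0 ≤ C := by positivity
  -- interval integrability
  have hint1 : ∀ t : ℝ, IntervalIntegrable
      (fun τ => τ ^ (2 * H - 2) * Real.exp (-a * τ)) volume 0 t := fun t =>
    (intervalIntegral.intervalIntegrable_rpow' hs).mul_continuousOn
      (Continuous.continuousOn (by continuity))
  have hint2 : ∀ t : ℝ, IntervalIntegrable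
      (fun τ => τ ^ (2 * H - 2) * Real.exp (a * τ - 2 * a * t)) volume 0 t := fun t =>
    (intervalIntegral.intervalIntegrable_rpow' hs).mul_continuousOn
      (Continuous.continuousOn (by continuity))
  have hsplit : ∀ t : ℝ,
      (∫ τ in (0:ℝ)..t, τ ^ (2 * H - 2) *
          (Real.exp (-a * τ) - Real.exp (a * τ - 2 * a * t)))
        = (∫ τ in (0:ℝ)..t, τ ^ (2 * H - 2) * Real.exp (-a * τ))
          - ∫ τ in (0:ℝ)..t, τ ^ (2 * H - 2) * Real.exp (a * τ - 2 * a * t) := by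
    intro t
    rw [← intervalIntegral.integral_sub (hint1 t) (hint2 t)]
    simp only [mul_sub]
  constructor
  · intro t ht
    rw [hZ t]
    apply mul_nonneg hC
    apply intervalIntegral.integral_nonneg ht
    intro τ hτ
    apply mul_nonneg (Real.rpow_nonneg hτ.1 _)
    have hle : a * τ - 2 * a * t ≤ -a * τ := by nlinarith [hτ.1, hτ.2]
    have := Real.exp_le_exp.mpr hle
    linarith
  · -- first integral converges to the Gamma value
    have hfi : IntegrableOn (fun x : ℝ => x ^ (2 * H - 2) * Real.exp (-a * x))
        (Set.Ioi 0) := by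
      have h := integrableOn_rpow_mul_exp_neg_mul_rpow hs (zero_lt_one' ℝ) ha
      refine h.congr_fun (fun x _ => ?_) measurableSet_Ioi
      beta_reduce
      rw [Real.rpow_one]
    have hI1 : Tendsto (fun t => ∫ τ in (0:ℝ)..t, τ ^ (2 * H - 2) * Real.exp (-a * τ))
        atTop (𝓝 (∫ x in Set.Ioi (0:ℝ), x ^ (2 * H - 2) * Real.exp (-a * x))) :=
      intervalIntegral_tendsto_integral_Ioi 0 hfi tendsto_id
    have hval : (∫ x in Set.Ioi (0:ℝ), x ^ (2 * H - 2) * Real.exp (-a * x))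
        = (1 / a) ^ (2 * H - 1) * Real.Gamma (2 * H - 1) := by
      rw [← Real.integral_rpow_mul_exp_neg_mul_Ioi h2H ha]
      simp only [show (2 * H - 1 - 1 : ℝ) = 2 * H - 2 by ring, neg_mul]
    rw [hval] at hI1
    -- second integral tends to 0
    have hI2 : Tendsto (fun t => ∫ τ in (0:ℝ)..t,
        τ ^ (2 * H - 2) * Real.exp (a * τ - 2 * a * t)) atTop (𝓝 0) := by
      have hB : Tendsto (fun t => Real.exp (-a * t) * (t ^ (2 * H - 1) / (2 * H - 1)))
          atTop (𝓝 0) := by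
        have h := (tendsto_rpow_mul_exp_neg_mul_atTop_nhds_zero (2 * H - 1) a ha).div_const
          (2 * H - 1)
        simpa [div_eq_mul_inv, mul_comm, mul_assoc, mul_left_comm] using h
      refine squeeze_zero' ?_ ?_ hB
      · filter_upwards [eventually_ge_atTop (0:ℝ)] with t ht
        apply intervalIntegral.integral_nonneg ht
        intro τ hτ
        exact mul_nonneg (Real.rpow_nonneg hτ.1 _) (Real.exp_nonneg _)
      · filter_upwards [eventually_ge_atTop (0:ℝ)] with t ht
        have hint3 : IntervalIntegrable (fun τ : ℝ => τ ^ (2 * H - 2) * Real.exp (-a * t))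
            volume 0 t :=
          (intervalIntegral.intervalIntegrable_rpow' hs).mul_continuousOn continuousOn_const
        calc (∫ τ in (0:ℝ)..t, τ ^ (2 * H - 2) * Real.exp (a * τ - 2 * a * t))
            ≤ ∫ τ in (0:ℝ)..t, τ ^ (2 * H - 2) * Real.exp (-a * t) := by
              apply intervalIntegral.integral_mono_on ht (hint2 t) hint3
              intro τ hτ
              apply mul_le_mul_of_nonneg_left _ (Real.rpow_nonneg hτ.1 _)
              exact Real.exp_le_exp.mpr (by nlinarith [hτ.1, hτ.2])
          _ = Real.exp (-a * t) * (t ^ (2 * H - 1) / (2 * H - 1)) := by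
              rw [intervalIntegral.integral_mul_const,
                integral_rpow (Or.inl hs)]
              rw [show (2 * H - 2 + 1 : ℝ) = 2 * H - 1 by ring,
                Real.zero_rpow h2H.ne']
              ring
    -- combine
    have hT : Tendsto (fun t => C *
        ((∫ τ in (0:ℝ)..t, τ ^ (2 * H - 2) * Real.exp (-a * τ))
          - ∫ τ in (0:ℝ)..t, τ ^ (2 * H - 2) * Real.exp (a * τ - 2 * a * t)))
        atTop (𝓝 (C * ((1 / a) ^ (2 * H - 1) * Real.Gamma (2 * H - 1) - 0))) :=
      (hI1.sub hI2).const_mul C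
    have e1 : ((1:ℝ) / a) ^ (2 * H - 1) = a * a ^ (-(2 * H)) := by
      rw [one_div, Real.inv_rpow ha.le, ← Real.rpow_neg ha.le,
        show -(2 * H - 1) = 1 + -(2 * H) by ring, Real.rpow_add ha, Real.rpow_one]
    have hvaleq : C * ((1 / a) ^ (2 * H - 1) * Real.Gamma (2 * H - 1) - 0)
        = σ ^ 2 / 2 * a ^ (-(2 * H)) * H * (2 * H - 1) * Real.Gamma (2 * H - 1) := by
      rw [sub_zero, e1, hC_def]
      field_simp
    rw [← hvaleq]
    exact hT.congr fun t => by rw [hZ t, hsplit t]
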